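/- Let $A > 0$ and $0 < \alpha < 1$. Define $f(n) = 1 + A n^{1-\alpha}\left[\prod_{j=2}^{n-1}\left(1+\frac{A}{j}\right) + \sum_{i=2}^{n-1} \frac{1}{i^{2-\alpha}} \prod_{j=i+1}^{n-1}\left(1+\frac{A}{j}\right)\right]$ for $n \ge 2$. Then there exists a constant $C > 0$ such that $f(n) \le C\, n^{1-\alpha+A}$ for all $n \ge 2$. -/

import Mathlib

open Real Finset


lemma aux_sum_inv_le_log : ∀ m : ℕ, 1 ≤ m → ∑ j ∈ Finset.Icc 2 m, (1:ℝ)/j ≤ Real.log m := by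
  intro m hm
  induction m with
  | zero => omega
  | succ k ih =>
    rcases Nat.eq_or_lt_of_le hm with h | h
    · simp [← h]
    · have hk : 1 ≤ k := by omega
      rw [Finset.sum_Icc_succ_top (by omega)]
      have h1 : Real.log ((k:ℝ)/(k+1)) ≤ (k:ℝ)/(k+1) - 1 :=
        Real.log_le_sub_one_of_pos (by positivity)
      have hkpos : (0:ℝ) < k := by exact_mod_cast hk
      rw [Real.log_div (by positivity) (by positivity)] at h1
      have h2 : (k:ℝ)/(k+1) - 1 = -(1/(k+1)) := by field_simp; ring
      push_cast
      have := ih hk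
      nlinarith [this, h1]

lemma aux_prod_le (A : ℝ) (hA : 0 < A) (a m : ℕ) (ha : 2 ≤ a) (hm : 1 ≤ m) :
    ∏ j ∈ Finset.Icc a m, (1 + A/(j:ℝ)) ≤ (m:ℝ)^A := by
  have hstep1 : ∏ j ∈ Finset.Icc a m, (1 + A/(j:ℝ)) ≤ ∏ j ∈ Finset.Icc 2 m, (1 + A/(j:ℝ)) := by
    have hsub : Finset.Icc a m ⊆ Finset.Icc 2 m := Finset.Icc_subset_Icc_left ha
    rw [← Finset.prod_sdiff hsub]
    have h1 : (1:ℝ) ≤ ∏ j ∈ Finset.Icc 2 m \ Finset.Icc a m, (1 + A/(j:ℝ)) := by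
      calc (1:ℝ) = ∏ j ∈ Finset.Icc 2 m \ Finset.Icc a m, (1:ℝ) := by simp
        _ ≤ _ := by
            apply Finset.prod_le_prod
            · intro j _; norm_num
            · intro j _
              have : (0:ℝ) ≤ A / j := by positivity
              linarith
    have h0 : (0:ℝ) ≤ ∏ j ∈ Finset.Icc a m, (1 + A/(j:ℝ)) := by
      apply Finset.prod_nonneg; intro j _; positivity
    nlinarith
  have hstep2 : ∏ j ∈ Finset.Icc 2 m, (1 + A/(j:ℝ)) ≤ ∏ j ∈ Finset.Icc 2 m, Real.exp (A/(j:ℝ)) := by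
    apply Finset.prod_le_prod
    · intro j _; positivity
    · intro j _
      have := Real.add_one_le_exp (A/(j:ℝ))
      linarith
  have hstep3 : ∏ j ∈ Finset.Icc 2 m, Real.exp (A/(j:ℝ)) ≤ (m:ℝ)^A := by
    rw [← Real.exp_sum]
    have hsum : ∑ j ∈ Finset.Icc 2 m, A/(j:ℝ) = A * ∑ j ∈ Finset.Icc 2 m, 1/(j:ℝ) := by
      rw [Finset.mul_sum]; apply Finset.sum_congr rfl; intro j _; ring
    have hmpos : (0:ℝ) < m := by exact_mod_cast hm
    rw [Real.rpow_def_of_pos hmpos, hsum]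
    apply Real.exp_le_exp.mpr
    rw [mul_comm (Real.log _)]
    exact mul_le_mul_of_nonneg_left (aux_sum_inv_le_log m hm) hA.le
  linarith

theorem error_factor_bound (A α : ℝ) (hA : 0 < A) (hα0 : 0 < α) (hα1 : α < 1) :
    ∃ C : ℝ, 0 < C ∧ ∀ n : ℕ, 2 ≤ n →
      1 + A * (n : ℝ) ^ (1 - α) *
        ((∏ j ∈ Finset.Icc 2 (n - 1), (1 + A / (j : ℝ))) +
          ∑ i ∈ Finset.Icc 2 (n - 1),
            1 / (i : ℝ) ^ (2 - α) *
              ∏ j ∈ Finset.Icc (i + 1) (n - 1), (1 + A / (j : ℝ))) ≤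
      C * (n : ℝ) ^ (1 - α + A) := by
  have hsummable : Summable (fun i : ℕ => ((i:ℝ) ^ (2 - α))⁻¹) :=
    Real.summable_nat_rpow_inv.mpr (by linarith)
  set S : ℝ := ∑' i : ℕ, ((i:ℝ) ^ (2 - α))⁻¹ with hSdef
  have hS0 : 0 ≤ S := tsum_nonneg (fun i => by positivity)
  refine ⟨1 + A * (1 + S), by nlinarith, ?_⟩
  intro n hn
  have hn1 : (1:ℝ) ≤ (n:ℝ) := by exact_mod_cast (by omega : 1 ≤ n)
  have hnpos : (0:ℝ) < n := by linarith
  have hm : 1 ≤ n - 1 := by omega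
  have hmono : ((n-1:ℕ):ℝ)^A ≤ (n:ℝ)^A :=
    Real.rpow_le_rpow (by positivity) (by exact_mod_cast Nat.sub_le n 1) hA.le
  have hprod1 : ∏ j ∈ Finset.Icc 2 (n-1), (1 + A/(j:ℝ)) ≤ (n:ℝ)^A :=
    le_trans (aux_prod_le A hA 2 (n-1) le_rfl hm) hmono
  have hnApos : (0:ℝ) < (n:ℝ)^A := Real.rpow_pos_of_pos hnpos A
  have hsum : ∑ i ∈ Finset.Icc 2 (n-1),
      1/(i:ℝ)^(2-α) * ∏ j ∈ Finset.Icc (i+1) (n-1), (1 + A/(j:ℝ)) ≤ S * (n:ℝ)^A := by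
    calc ∑ i ∈ Finset.Icc 2 (n-1),
        1/(i:ℝ)^(2-α) * ∏ j ∈ Finset.Icc (i+1) (n-1), (1 + A/(j:ℝ))
        ≤ ∑ i ∈ Finset.Icc 2 (n-1), ((i:ℝ)^(2-α))⁻¹ * (n:ℝ)^A := by
          apply Finset.sum_le_sum
          intro i hi
          have hi2 : 2 ≤ i := (Finset.mem_Icc.mp hi).1
          have hip : (0:ℝ) < (i:ℝ)^(2-α) := by
            have : (0:ℝ) < (i:ℝ) := by exact_mod_cast (by omega : 0 < i)
            positivity
          rw [one_div]
          apply mul_le_mul_of_nonneg_left _ (by positivity)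
          exact le_trans (aux_prod_le A hA (i+1) (n-1) (by omega) hm) hmono
      _ = (∑ i ∈ Finset.Icc 2 (n-1), ((i:ℝ)^(2-α))⁻¹) * (n:ℝ)^A := by
          rw [Finset.sum_mul]
      _ ≤ S * (n:ℝ)^A := by
          apply mul_le_mul_of_nonneg_right _ hnApos.le
          exact hsummable.sum_le_tsum _ (fun i _ => by positivity)
  have hX1 : (1:ℝ) ≤ (n:ℝ)^(1-α+A) := Real.one_le_rpow hn1 (by linarith)
  have hsplit : (n:ℝ)^(1-α+A) = (n:ℝ)^(1-α) * (n:ℝ)^A := Real.rpow_add hnpos _ _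
  have hy : (0:ℝ) < (n:ℝ)^(1-α) := Real.rpow_pos_of_pos hnpos _
  rw [hsplit] at hX1 ⊢
  nlinarith [mul_le_mul_of_nonneg_left (add_le_add hprod1 hsum) (by positivity : (0:ℝ) ≤ A * (n:ℝ)^(1-α))]
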